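/- Define x : ℂ² → ℂ³ by x(v) = (v₁² − v₂², i(v₁² + v₂²), 2v₁v₂) and φ : ℂ² → M₃(ℂ) by φ(v)_{jk} = x(v)_j · x(v)_k. Then: (a) for every v ≠ 0, φ(v) is a nonzero symmetric matrix with φ(v)² = 0; (b) φ maps ℂ² \ {0} onto the set {A ∈ M₃(ℂ) : A ≠ 0, A = Aᵀ, A² = 0}; (c) for v, w ≠ 0 one has φ(v) = φ(w) if and only if w ∈ {v, iv, −v, −iv}. Consequently φ induces a bijection from the quotient of ℂ² \ {0} by the ℤ/4ℤ-action generated by scalar multiplication by i onto the set of nonzero symmetric square-zero 3×3 complex matrices. -/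

import Mathlib

open Matrix

/-- `x(v) = (v₁² − v₂², i(v₁² + v₂²), 2v₁v₂)`. -/
noncomputable def xmap (v : Fin 2 → ℂ) : Fin 3 → ℂ :=
  ![v 0 ^ 2 - v 1 ^ 2, Complex.I * (v 0 ^ 2 + v 1 ^ 2), 2 * v 0 * v 1]

/-- `φ(v) = x(v) x(v)ᵀ`. -/
noncomputable def phimap (v : Fin 2 → ℂ) : Matrix (Fin 3) (Fin 3) ℂ :=
  Matrix.of fun i j => xmap v i * xmap v j

lemma xmap0 (v : Fin 2 → ℂ) : xmap v 0 = v 0 ^ 2 - v 1 ^ 2 := rfl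
lemma xmap1 (v : Fin 2 → ℂ) : xmap v 1 = Complex.I * (v 0 ^ 2 + v 1 ^ 2) := rfl
lemma xmap2 (v : Fin 2 → ℂ) : xmap v 2 = 2 * v 0 * v 1 := rfl

lemma sq_eq_or {a b : ℂ} (h : a ^ 2 = b ^ 2) : a = b ∨ a = -b := by
  have h2 : (a - b) * (a + b) = 0 := by linear_combination h
  rcases mul_eq_zero.1 h2 with h3 | h3
  · exact Or.inl (by linear_combination h3)
  · exact Or.inr (by linear_combination h3)

lemma xmap_ne_zero {v : Fin 2 → ℂ} (hv : v ≠ 0) : xmap v ≠ 0 := by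
  intro h
  have h0 := congrFun h 0
  have h1 := congrFun h 1
  rw [xmap0] at h0
  rw [xmap1] at h1
  simp only [Pi.zero_apply] at h0 h1
  have h1' : v 0 ^ 2 + v 1 ^ 2 = 0 := by
    rcases mul_eq_zero.1 h1 with h | h
    · exact absurd h Complex.I_ne_zero
    · exact h
  apply hv
  have hv0 : v 0 ^ 2 = 0 := by linear_combination (h0 + h1') / 2
  have hv1 : v 1 ^ 2 = 0 := by linear_combination (h1' - h0) / 2
  funext i
  fin_cases i
  · exact pow_eq_zero_iff two_ne_zero |>.1 hv0
  · exact pow_eq_zero_iff two_ne_zero |>.1 hv1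

lemma xmap_inj {v w : Fin 2 → ℂ} (h : xmap w = xmap v) : w = v ∨ w = -v := by
  have h0 := congrFun h 0
  have h1 := congrFun h 1
  have h2 := congrFun h 2
  rw [xmap0, xmap0] at h0
  rw [xmap1, xmap1] at h1
  rw [xmap2, xmap2] at h2
  have hsum : w 0 ^ 2 + w 1 ^ 2 = v 0 ^ 2 + v 1 ^ 2 :=
    mul_left_cancel₀ Complex.I_ne_zero h1
  have e0 : w 0 ^ 2 = v 0 ^ 2 := by linear_combination (h0 + hsum) / 2
  have e1 : w 1 ^ 2 = v 1 ^ 2 := by linear_combination (hsum - h0) / 2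
  have e2 : w 0 * w 1 = v 0 * v 1 := by linear_combination h2 / 2
  rcases sq_eq_or e0 with c0 | c0
  · by_cases hv0 : v 0 = 0
    · rcases sq_eq_or e1 with c1 | c1
      · left; funext i; fin_cases i <;> simp [c0, c1]
      · right; funext i; fin_cases i <;> simp [c0, c1, hv0]
    · left; funext i; fin_cases i
      · exact c0
      · rw [c0] at e2
        exact mul_left_cancel₀ hv0 e2
  · by_cases hv0 : v 0 = 0
    · rcases sq_eq_or e1 with c1 | c1
      · left; funext i; fin_cases i <;> simp [c0, c1, hv0]
      · right; funext i; fin_cases i <;> simp [c0, c1, hv0]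
    · right; funext i; fin_cases i
      · simpa using c0
      · rw [c0] at e2
        have e2' : v 0 * (-(v 1)) = v 0 * w 1 := by linear_combination e2
        simpa using (mul_left_cancel₀ hv0 e2').symm

lemma xmap_isotropic (v : Fin 2 → ℂ) :
    xmap v 0 ^ 2 + xmap v 1 ^ 2 + xmap v 2 ^ 2 = 0 := by
  rw [xmap0, xmap1, xmap2]
  linear_combination (v 0 ^ 2 + v 1 ^ 2) ^ 2 * Complex.I_sq

lemma outer_eq {x y : Fin 3 → ℂ} (hx : x ≠ 0)
    (h : ∀ i j, x i * x j = y i * y j) : y = x ∨ y = -x := by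
  obtain ⟨i, hi⟩ : ∃ i, x i ≠ 0 := by
    by_contra hc
    push_neg at hc
    exact hx (funext hc)
  have hyi2 : y i ^ 2 = x i ^ 2 := by
    have := h i i; rw [← pow_two, ← pow_two] at this; exact this.symm
  have h2 : (y i - x i) * (y i + x i) = 0 := by linear_combination hyi2
  have hyi : y i ≠ 0 := by
    intro h0
    rw [h0] at hyi2
    exact hi (pow_eq_zero_iff two_ne_zero |>.1 (by linear_combination -hyi2))
  rcases mul_eq_zero.1 h2 with hc | hc
  · left
    have hyx : y i = x i := by linear_combination hc
    funext j
    have hj := h i j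
    rw [hyx] at hj
    exact mul_left_cancel₀ hi hj.symm
  · right
    have hyx : y i = -x i := by linear_combination hc
    funext j
    have hj := h i j
    rw [hyx] at hj
    have h3 : x i * (-(x j)) = x i * y j := by linear_combination -hj
    show y j = -(x j)
    exact (mul_left_cancel₀ hi h3).symm

/-- Every isotropic vector in ℂ³ is hit by xmap. -/
lemma xmap_surj {x : Fin 3 → ℂ} (hq : x 0 ^ 2 + x 1 ^ 2 + x 2 ^ 2 = 0) :
    ∃ v : Fin 2 → ℂ, xmap v = x := by
  obtain ⟨a, ha⟩ := IsAlgClosed.exists_pow_nat_eq ((x 0 - Complex.I * x 1) / 2) (n := 2) two_pos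
  obtain ⟨b, hb⟩ := IsAlgClosed.exists_pow_nat_eq ((-x 0 - Complex.I * x 1) / 2) (n := 2) two_pos
  have key : (2 * a * b) ^ 2 = x 2 ^ 2 := by
    linear_combination 4 * b ^ 2 * ha + (2 * x 0 - 2 * Complex.I * x 1) * hb +
      x 1 ^ 2 * Complex.I_sq - hq
  have h2 : (2 * a * b - x 2) * (2 * a * b + x 2) = 0 := by linear_combination key
  have hx0 : a ^ 2 - b ^ 2 = x 0 := by rw [ha, hb]; ring
  have hx1 : Complex.I * (a ^ 2 + b ^ 2) = x 1 := by
    linear_combination Complex.I * ha + Complex.I * hb - x 1 * Complex.I_sq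
  rcases mul_eq_zero.1 h2 with hc | hc
  · refine ⟨![a, b], ?_⟩
    funext j
    fin_cases j
    · show a ^ 2 - b ^ 2 = x 0; exact hx0
    · show Complex.I * (a ^ 2 + b ^ 2) = x 1; exact hx1
    · show 2 * a * b = x 2; linear_combination hc
  · refine ⟨![a, -b], ?_⟩
    funext j
    fin_cases j
    · show a ^ 2 - (-b) ^ 2 = x 0; linear_combination hx0
    · show Complex.I * (a ^ 2 + (-b) ^ 2) = x 1; linear_combination hx1
    · show 2 * a * (-b) = x 2; linear_combination -hc

lemma xmap_neg (v : Fin 2 → ℂ) : xmap (-v) = xmap v := by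
  funext i
  fin_cases i <;> simp [xmap0, xmap1, xmap2]

lemma xmap_smul_I (v : Fin 2 → ℂ) : xmap (Complex.I • v) = -xmap v := by
  funext i
  fin_cases i
  · show (Complex.I * v 0) ^ 2 - (Complex.I * v 1) ^ 2 = -(v 0 ^ 2 - v 1 ^ 2)
    linear_combination (v 0 ^ 2 - v 1 ^ 2) * Complex.I_sq
  · show Complex.I * ((Complex.I * v 0) ^ 2 + (Complex.I * v 1) ^ 2) =
      -(Complex.I * (v 0 ^ 2 + v 1 ^ 2))
    linear_combination Complex.I * (v 0 ^ 2 + v 1 ^ 2) * Complex.I_sq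
  · show 2 * (Complex.I * v 0) * (Complex.I * v 1) = -(2 * v 0 * v 1)
    linear_combination 2 * v 0 * v 1 * Complex.I_sq

lemma minors_vanish {A : Matrix (Fin 3) (Fin 3) ℂ} (hA2 : A * A = 0) :
    ∀ i j k l, A i k * A j l = A i l * A j k := by
  have hrange : LinearMap.range A.mulVecLin ≤ LinearMap.ker A.mulVecLin := by
    rintro y ⟨z, rfl⟩
    simp only [LinearMap.mem_ker, Matrix.mulVecLin_apply, Matrix.mulVec_mulVec, hA2,
      Matrix.zero_mulVec]
  have hrk : Module.finrank ℂ ↥(LinearMap.range A.mulVecLin) ≤ 1 := by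
    have h1 := LinearMap.finrank_range_add_finrank_ker A.mulVecLin
    have h2 : Module.finrank ℂ (Fin 3 → ℂ) = 3 := by
      simp [Module.finrank_fintype_fun_eq_card]
    have h3 := Submodule.finrank_mono hrange
    omega
  obtain ⟨y0, hy0⟩ := finrank_le_one_iff.1 hrk
  have hcol : ∀ k : Fin 3, ∃ c : ℂ, ∀ i, A i k = c * (y0 : Fin 3 → ℂ) i := by
    intro k
    have hmem : (A.mulVec (Pi.single k 1)) ∈ LinearMap.range A.mulVecLin :=
      ⟨Pi.single k 1, rfl⟩
    obtain ⟨c, hc⟩ := hy0 ⟨A.mulVec (Pi.single k 1), hmem⟩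
    refine ⟨c, fun i => ?_⟩
    have := congrFun (congrArg Subtype.val hc) i
    simp only [Matrix.mulVec_single, mul_one, MulOpposite.op_one, one_smul, Matrix.col_apply,
      SetLike.val_smul, Pi.smul_apply, smul_eq_mul] at this
    exact this.symm
  intro i j k l
  obtain ⟨ck, hck⟩ := hcol k
  obtain ⟨cl, hcl⟩ := hcol l
  rw [hck i, hck j, hcl i, hcl j]
  ring


lemma xmap_zero : xmap (0 : Fin 2 → ℂ) = 0 := by
  funext i
  fin_cases i <;> simp [xmap0, xmap1, xmap2]

lemma phimap_congr {v w : Fin 2 → ℂ}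
    (h : xmap w = xmap v ∨ xmap w = -xmap v) : phimap w = phimap v := by
  rcases h with h | h
  · funext i j
    show xmap w i * xmap w j = xmap v i * xmap v j
    rw [h]
  · funext i j
    show xmap w i * xmap w j = xmap v i * xmap v j
    rw [h]
    simp only [Pi.neg_apply]
    ring

/-- `φ` maps `ℂ² \ {0}` onto the nonzero symmetric square-zero `3 × 3` complex matrices,
with fibers exactly the orbits `{v, iv, −v, −iv}` of the `ℤ/4`-action generated by
multiplication by `i`. -/
theorem stmt_9 :
    (∀ v : Fin 2 → ℂ, v ≠ 0 →
      phimap v ≠ 0 ∧ phimap v = (phimap v)ᵀ ∧ phimap v * phimap v = 0) ∧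
    (∀ A : Matrix (Fin 3) (Fin 3) ℂ, A ≠ 0 → A = Aᵀ → A * A = 0 →
      ∃ v : Fin 2 → ℂ, v ≠ 0 ∧ phimap v = A) ∧
    (∀ v w : Fin 2 → ℂ, v ≠ 0 → w ≠ 0 →
      (phimap v = phimap w ↔
        (w = v ∨ w = Complex.I • v ∨ w = -v ∨ w = -(Complex.I • v)))) := by
  refine ⟨?_, ?_, ?_⟩
  · -- part (a)
    intro v hv
    refine ⟨?_, ?_, ?_⟩
    · intro h0
      obtain ⟨i, hi⟩ : ∃ i, xmap v i ≠ 0 := by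
        by_contra hc
        push_neg at hc
        exact xmap_ne_zero hv (funext hc)
      have := congrFun (congrFun h0 i) i
      exact hi (mul_self_eq_zero.1 this)
    · funext i j
      show xmap v i * xmap v j = xmap v j * xmap v i
      ring
    · funext i k
      show (phimap v * phimap v) i k = 0
      rw [Matrix.mul_apply, Fin.sum_univ_three]
      show xmap v i * xmap v 0 * (xmap v 0 * xmap v k) +
        xmap v i * xmap v 1 * (xmap v 1 * xmap v k) +
        xmap v i * xmap v 2 * (xmap v 2 * xmap v k) = 0
      linear_combination (xmap v i * xmap v k) * xmap_isotropic v
  · -- part (b)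
    intro A hA0 hsym hA2
    have hsym' : ∀ i j, A i j = A j i := fun i j => congrFun (congrFun hsym i) j
    have hminor := minors_vanish hA2
    obtain ⟨j, hj⟩ : ∃ j, A j j ≠ 0 := by
      by_contra hc
      push_neg at hc
      apply hA0
      funext i k
      have h1 : A i k * A i k = 0 := by
        have := hminor i k k i
        rw [hsym' k i] at this
        rw [this, hc i, zero_mul]
      exact mul_self_eq_zero.1 h1
    obtain ⟨s, hs⟩ := IsAlgClosed.exists_pow_nat_eq (A j j) (n := 2) two_pos
    have hs0 : s ≠ 0 := by
      intro h
      rw [h] at hs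
      exact hj (by simpa using hs.symm)
    set x : Fin 3 → ℂ := fun i => A i j / s with hxdef
    have hss : s * s = A j j := by linear_combination hs
    have houter : ∀ i k, x i * x k = A i k := by
      intro i k
      have h1 : x i * x k = A i j * A k j / (s * s) := by
        rw [hxdef]
        field_simp
      rw [h1, hss, div_eq_iff hj, hsym' k j]
      exact (hminor i j k j).symm
    have hxj : x j ≠ 0 := div_ne_zero hj hs0
    have hq : x 0 ^ 2 + x 1 ^ 2 + x 2 ^ 2 = 0 := by
      have hjj := congrFun (congrFun hA2 j) j
      rw [Matrix.mul_apply, Fin.sum_univ_three, Matrix.zero_apply] at hjj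
      rw [← houter j 0, ← houter 0 j, ← houter j 1, ← houter 1 j,
        ← houter j 2, ← houter 2 j] at hjj
      have hq2 : (x 0 ^ 2 + x 1 ^ 2 + x 2 ^ 2) * x j ^ 2 = 0 := by
        linear_combination hjj
      rcases mul_eq_zero.1 hq2 with h | h
      · exact h
      · exact absurd (pow_eq_zero_iff two_ne_zero |>.1 h) hxj
    obtain ⟨v, hv⟩ := xmap_surj hq
    refine ⟨v, ?_, ?_⟩
    · rintro rfl
      rw [xmap_zero] at hv
      exact hxj (by rw [← hv]; rfl)
    · funext i k
      show xmap v i * xmap v k = A i k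
      rw [hv]
      exact houter i k
  · -- part (c)
    intro v w hv hw
    constructor
    · intro h
      have hprod : ∀ i j, xmap v i * xmap v j = xmap w i * xmap w j :=
        fun i j => congrFun (congrFun h i) j
      rcases outer_eq (xmap_ne_zero hv) hprod with hyx | hyx
      · rcases xmap_inj hyx with h1 | h1
        · exact Or.inl h1
        · exact Or.inr (Or.inr (Or.inl h1))
      · have hyx' : xmap w = xmap (Complex.I • v) := by
          rw [xmap_smul_I]; exact hyx
        rcases xmap_inj hyx' with h1 | h1
        · exact Or.inr (Or.inl h1)
        · exact Or.inr (Or.inr (Or.inr h1))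
    · rintro (rfl | rfl | rfl | rfl)
      · rfl
      · exact (phimap_congr (Or.inr (xmap_smul_I v))).symm
      · exact (phimap_congr (Or.inl (xmap_neg v))).symm
      · exact (phimap_congr (Or.inr (((xmap_neg _).trans (xmap_smul_I v))))).symm
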